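/- The subgroup Γ₀ of G generated by e₁ and e₂ equals the set of all x ∈ ℝ⁵ satisfying: x₁ ∈ ℤ, x₂ ∈ ℤ, x₃ − x₁x₂/2 ∈ ℤ, x₄ − x₁²x₂/12 − ((x₁+1)/2)·(x₃ − x₁x₂/2) ∈ ℤ, and x₅ + x₁x₂²/12 + ((x₂+1)/2)·(x₃ − x₁x₂/2) ∈ ℤ. -/

import Mathlib

/-- The simply connected nilpotent Lie group of type `(2,3,5)` in exponential
coordinates: the underlying set is `ℝ⁵`. -/
@[ext]
structure G235 where
  a : ℝ
  b : ℝ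
  c : ℝ
  d : ℝ
  e : ℝ

namespace G235

/-- The Baker–Campbell–Hausdorff multiplication. -/
noncomputable instance : Mul G235 :=
  ⟨fun x y =>
    ⟨x.a + y.a, x.b + y.b,
      x.c + y.c + (x.a * y.b - x.b * y.a) / 2,
      x.d + y.d + (x.a * y.c - x.c * y.a) / 2 + (x.a - y.a) * (x.a * y.b - x.b * y.a) / 12,
      x.e + y.e + (x.b * y.c - x.c * y.b) / 2 + (x.b - y.b) * (x.a * y.b - x.b * y.a) / 12⟩⟩

instance : One G235 := ⟨⟨0, 0, 0, 0, 0⟩⟩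

noncomputable instance : Inv G235 := ⟨fun x => ⟨-x.a, -x.b, -x.c, -x.d, -x.e⟩⟩

@[simp] lemma mul_a (x y : G235) : (x * y).a = x.a + y.a := rfl
@[simp] lemma mul_b (x y : G235) : (x * y).b = x.b + y.b := rfl
@[simp] lemma mul_c (x y : G235) :
    (x * y).c = x.c + y.c + (x.a * y.b - x.b * y.a) / 2 := rfl
@[simp] lemma mul_d (x y : G235) :
    (x * y).d = x.d + y.d + (x.a * y.c - x.c * y.a) / 2 +
      (x.a - y.a) * (x.a * y.b - x.b * y.a) / 12 := rfl
@[simp] lemma mul_e (x y : G235) :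
    (x * y).e = x.e + y.e + (x.b * y.c - x.c * y.b) / 2 +
      (x.b - y.b) * (x.a * y.b - x.b * y.a) / 12 := rfl
@[simp] lemma one_a : (1 : G235).a = 0 := rfl
@[simp] lemma one_b : (1 : G235).b = 0 := rfl
@[simp] lemma one_c : (1 : G235).c = 0 := rfl
@[simp] lemma one_d : (1 : G235).d = 0 := rfl
@[simp] lemma one_e : (1 : G235).e = 0 := rfl
@[simp] lemma inv_a (x : G235) : x⁻¹.a = -x.a := rfl
@[simp] lemma inv_b (x : G235) : x⁻¹.b = -x.b := rfl
@[simp] lemma inv_c (x : G235) : x⁻¹.c = -x.c := rfl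
@[simp] lemma inv_d (x : G235) : x⁻¹.d = -x.d := rfl
@[simp] lemma inv_e (x : G235) : x⁻¹.e = -x.e := rfl

/-- The BCH multiplication makes `G235` a group with identity `0` and inverse `-x`. -/
noncomputable instance : Group G235 where
  mul_assoc x y z := by ext <;> simp <;> ring
  one_mul x := by ext <;> simp
  mul_one x := by ext <;> simp
  inv_mul_cancel x := by ext <;> simp <;> ring

/-- `G235` carries the Euclidean topology of `ℝ⁵`. -/
instance : TopologicalSpace G235 :=
  TopologicalSpace.induced (fun x => (x.a, x.b, x.c, x.d, x.e)) inferInstance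

/-- The generator `e₁ = (1,0,0,0,0)`. -/
noncomputable def e1 : G235 := ⟨1, 0, 0, 0, 0⟩

/-- The generator `e₂ = (0,1,0,0,0)`. -/
noncomputable def e2 : G235 := ⟨0, 1, 0, 0, 0⟩

noncomputable def g3 : G235 := ⟨0, 0, 1, 1/2, 1/2⟩
noncomputable def g4 : G235 := ⟨0, 0, 0, 1, 0⟩
noncomputable def g5 : G235 := ⟨0, 0, 0, 0, 1⟩

lemma e1_mem : e1 ∈ Subgroup.closure ({e1, e2} : Set G235) :=
  Subgroup.subset_closure (by simp)

lemma e2_mem : e2 ∈ Subgroup.closure ({e1, e2} : Set G235) :=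
  Subgroup.subset_closure (by simp)

lemma g3_eq : g3 = e1 * e2 * e1⁻¹ * e2⁻¹ := by
  ext <;> simp [e1, e2, g3] <;> norm_num

lemma g3_mem : g3 ∈ Subgroup.closure ({e1, e2} : Set G235) := by
  rw [g3_eq]
  exact mul_mem (mul_mem (mul_mem e1_mem e2_mem) (inv_mem e1_mem)) (inv_mem e2_mem)

lemma g4_eq : g4 = e1 * g3 * e1⁻¹ * g3⁻¹ := by
  ext <;> simp [e1, g3, g4] <;> norm_num

lemma g4_mem : g4 ∈ Subgroup.closure ({e1, e2} : Set G235) := by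
  rw [g4_eq]
  exact mul_mem (mul_mem (mul_mem e1_mem g3_mem) (inv_mem e1_mem)) (inv_mem g3_mem)

lemma g5_eq : g5 = e2 * g3 * e2⁻¹ * g3⁻¹ := by
  ext <;> simp [e2, g3, g5] <;> norm_num

lemma g5_mem : g5 ∈ Subgroup.closure ({e1, e2} : Set G235) := by
  rw [g5_eq]
  exact mul_mem (mul_mem (mul_mem e2_mem g3_mem) (inv_mem e2_mem)) (inv_mem g3_mem)

lemma e1_zpow (n : ℤ) : e1 ^ n = ⟨(n : ℝ), 0, 0, 0, 0⟩ := by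
  induction n using Int.induction_on with
  | zero => rw [zpow_zero]; ext <;> simp
  | succ k ih => rw [zpow_add_one, ih]; ext <;> simp [e1] <;> push_cast <;> ring
  | pred k ih => rw [zpow_sub_one, ih]; ext <;> simp [e1] <;> push_cast <;> ring

lemma e2_zpow (n : ℤ) : e2 ^ n = ⟨0, (n : ℝ), 0, 0, 0⟩ := by
  induction n using Int.induction_on with
  | zero => rw [zpow_zero]; ext <;> simp
  | succ k ih => rw [zpow_add_one, ih]; ext <;> simp [e2] <;> push_cast <;> ring
  | pred k ih => rw [zpow_sub_one, ih]; ext <;> simp [e2] <;> push_cast <;> ring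

lemma g3_zpow (n : ℤ) : g3 ^ n = ⟨0, 0, (n : ℝ), (n : ℝ) / 2, (n : ℝ) / 2⟩ := by
  induction n using Int.induction_on with
  | zero => rw [zpow_zero]; ext <;> simp
  | succ k ih => rw [zpow_add_one, ih]; ext <;> simp [g3] <;> push_cast <;> ring
  | pred k ih => rw [zpow_sub_one, ih]; ext <;> simp [g3] <;> push_cast <;> ring

lemma g4_zpow (n : ℤ) : g4 ^ n = ⟨0, 0, 0, (n : ℝ), 0⟩ := by
  induction n using Int.induction_on with
  | zero => rw [zpow_zero]; ext <;> simp
  | succ k ih => rw [zpow_add_one, ih]; ext <;> simp [g4] <;> push_cast <;> ring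
  | pred k ih => rw [zpow_sub_one, ih]; ext <;> simp [g4] <;> push_cast <;> ring

lemma g5_zpow (n : ℤ) : g5 ^ n = ⟨0, 0, 0, 0, (n : ℝ)⟩ := by
  induction n using Int.induction_on with
  | zero => rw [zpow_zero]; ext <;> simp
  | succ k ih => rw [zpow_add_one, ih]; ext <;> simp [g5] <;> push_cast <;> ring
  | pred k ih => rw [zpow_sub_one, ih]; ext <;> simp [g5] <;> push_cast <;> ring


lemma coords_of (u : G235) (p q r s t : ℤ) (hp : u.a = p) (hq : u.b = q)
    (hr : u.c - u.a * u.b / 2 = r)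
    (hs : u.d - u.a ^ 2 * u.b / 12 - (u.a + 1) / 2 * (u.c - u.a * u.b / 2) = s)
    (ht : u.e + u.a * u.b ^ 2 / 12 + (u.b + 1) / 2 * (u.c - u.a * u.b / 2) = t) :
    u.c = (p : ℝ) * q / 2 + r ∧
      u.d = (p : ℝ) ^ 2 * q / 12 + ((p : ℝ) + 1) / 2 * r + s ∧
      u.e = -((p : ℝ) * q ^ 2) / 12 - ((q : ℝ) + 1) / 2 * r + t := by
  rw [hp, hq] at hr hs ht
  have hc : u.c = (p : ℝ) * q / 2 + r := by linear_combination hr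
  rw [hc] at hs ht
  refine ⟨hc, by linear_combination hs, by linear_combination ht⟩

end G235

open G235

/-- The subgroup `Γ₀` of `G` generated by `e₁` and `e₂` consists exactly of the points
`x ∈ ℝ⁵` with `x₁ ∈ ℤ`, `x₂ ∈ ℤ`, `x₃ − x₁x₂/2 ∈ ℤ`,
`x₄ − x₁²x₂/12 − ((x₁+1)/2)(x₃ − x₁x₂/2) ∈ ℤ` and
`x₅ + x₁x₂²/12 + ((x₂+1)/2)(x₃ − x₁x₂/2) ∈ ℤ`. -/
theorem stmt12 (x : G235) :
    x ∈ Subgroup.closure ({e1, e2} : Set G235) ↔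
      (∃ m : ℤ, x.a = m) ∧ (∃ m : ℤ, x.b = m) ∧
        (∃ m : ℤ, x.c - x.a * x.b / 2 = m) ∧
        (∃ m : ℤ, x.d - x.a ^ 2 * x.b / 12 - (x.a + 1) / 2 * (x.c - x.a * x.b / 2) = m) ∧
        (∃ m : ℤ, x.e + x.a * x.b ^ 2 / 12 + (x.b + 1) / 2 * (x.c - x.a * x.b / 2) = m) := by
  constructor
  · intro hx
    induction hx using Subgroup.closure_induction with
    | mem z hz =>
      rcases hz with hz | hz <;> subst hz
      · exact ⟨⟨1, by norm_num [e1]⟩, ⟨0, by norm_num [e1]⟩, ⟨0, by norm_num [e1]⟩,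
          ⟨0, by norm_num [e1]⟩, ⟨0, by norm_num [e1]⟩⟩
      · exact ⟨⟨0, by norm_num [e2]⟩, ⟨1, by norm_num [e2]⟩, ⟨0, by norm_num [e2]⟩,
          ⟨0, by norm_num [e2]⟩, ⟨0, by norm_num [e2]⟩⟩
    | one =>
      exact ⟨⟨0, by norm_num⟩, ⟨0, by norm_num⟩, ⟨0, by norm_num⟩, ⟨0, by norm_num⟩,
        ⟨0, by norm_num⟩⟩
    | mul u v hu hv ihu ihv =>
      obtain ⟨⟨p, hp⟩, ⟨q, hq⟩, ⟨r, hr⟩, ⟨s, hs⟩, ⟨t, ht⟩⟩ := ihu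
      obtain ⟨⟨P, hP⟩, ⟨Q, hQ⟩, ⟨R, hR⟩, ⟨S, hS⟩, ⟨T, hT⟩⟩ := ihv
      obtain ⟨k, hk⟩ := Int.even_mul_succ_self P
      obtain ⟨l, hl⟩ := Int.even_mul_succ_self q
      have hk' : (P : ℝ) * ((P : ℝ) + 1) = (k : ℝ) + k := by exact_mod_cast hk
      have hl' : (q : ℝ) * ((q : ℝ) + 1) = (l : ℝ) + l := by exact_mod_cast hl
      obtain ⟨hc, hd, he⟩ := coords_of u p q r s t hp hq hr hs ht
      obtain ⟨hC, hD, hE⟩ := coords_of v P Q R S T hP hQ hR hS hT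
      refine ⟨⟨p + P, ?_⟩, ⟨q + Q, ?_⟩, ⟨r + R - q * P, ?_⟩,
        ⟨s + S - r * P + q * k, ?_⟩, ⟨t + T + q * R - P * l, ?_⟩⟩ <;>
          simp only [mul_a, mul_b, mul_c, mul_d, mul_e] <;>
          simp only [hp, hq, hc, hd, he, hP, hQ, hC, hD, hE] <;> push_cast
      · ring
      · ring
      · ring
      · linear_combination ((q : ℝ) / 2) * hk'
      · linear_combination (-(P : ℝ) / 2) * hl'
    | inv u hu ihu =>
      obtain ⟨⟨p, hp⟩, ⟨q, hq⟩, ⟨r, hr⟩, ⟨s, hs⟩, ⟨t, ht⟩⟩ := ihu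
      obtain ⟨k, hk⟩ := Int.even_mul_succ_self (p - 1)
      obtain ⟨l, hl⟩ := Int.even_mul_succ_self (q - 1)
      have hk' : ((p : ℝ) - 1) * (((p : ℝ) - 1) + 1) = (k : ℝ) + k := by exact_mod_cast hk
      have hl' : ((q : ℝ) - 1) * (((q : ℝ) - 1) + 1) = (l : ℝ) + l := by exact_mod_cast hl
      obtain ⟨hc, hd, he⟩ := coords_of u p q r s t hp hq hr hs ht
      refine ⟨⟨-p, ?_⟩, ⟨-q, ?_⟩, ⟨-r - p * q, ?_⟩, ⟨-s - p * r - k * q, ?_⟩,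
        ⟨-t + q * r + l * p, ?_⟩⟩ <;>
          simp only [inv_a, inv_b, inv_c, inv_d, inv_e] <;>
          simp only [hp, hq, hc, hd, he] <;> push_cast
      · ring
      · ring
      · ring
      · linear_combination (-(q : ℝ) / 2) * hk'
      · linear_combination ((p : ℝ) / 2) * hl'
  · rintro ⟨⟨p, hp⟩, ⟨q, hq⟩, ⟨r, hr⟩, ⟨s, hs⟩, ⟨t, ht⟩⟩
    obtain ⟨hc, hd, he⟩ := coords_of x p q r s t hp hq hr hs ht
    have hx : x = e1 ^ p * e2 ^ q * g3 ^ r * g4 ^ s * g5 ^ (t - r * (q + 1)) := by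
      rw [e1_zpow, e2_zpow, g3_zpow, g4_zpow, g5_zpow]
      ext <;> simp only [mul_a, mul_b, mul_c, mul_d, mul_e] <;>
        simp only [hp, hq, hc, hd, he] <;> push_cast <;> ring
    rw [hx]
    exact mul_mem (mul_mem (mul_mem (mul_mem (zpow_mem e1_mem p) (zpow_mem e2_mem q))
      (zpow_mem g3_mem r)) (zpow_mem g4_mem s)) (zpow_mem g5_mem (t - r * (q + 1)))
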